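/- Let P be a bounded open convex subset of ℝⁿ with positive volume. The function F(c) = ∫_P e^{c·x} dx is strictly convex on ℝⁿ. -/

import Mathlib

open MeasureTheory

theorem stmt1 (n : ℕ) (P : Set (EuclideanSpace ℝ (Fin n)))
    (hopen : IsOpen P) (hconv : Convex ℝ P) (hbdd : Bornology.IsBounded P)
    (hpos : 0 < volume P) :
    StrictConvexOn ℝ Set.univ
      (fun c : EuclideanSpace ℝ (Fin n) => ∫ x in P, Real.exp (inner ℝ c x : ℝ)) := by
  have hinteg : ∀ c : EuclideanSpace ℝ (Fin n),
      IntegrableOn (fun x => Real.exp (inner ℝ c x : ℝ)) P volume := by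
    intro c
    have hcont : Continuous fun x : EuclideanSpace ℝ (Fin n) => Real.exp (inner ℝ c x : ℝ) :=
      Real.continuous_exp.comp (continuous_const.inner continuous_id)
    have hK : IsCompact (closure P) := hbdd.isCompact_closure
    exact (hcont.continuousOn.integrableOn_compact hK).mono_set subset_closure
  refine ⟨convex_univ, ?_⟩
  intro c _ d _ hcd a b ha hb hab
  -- define the gap function
  set g : EuclideanSpace ℝ (Fin n) → ℝ := fun x =>
    a * Real.exp (inner ℝ c x : ℝ) + b * Real.exp (inner ℝ d x : ℝ)
      - Real.exp (inner ℝ (a • c + b • d) x : ℝ) with hg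
  have hinner : ∀ x, (inner ℝ (a • c + b • d) x : ℝ) = a * inner ℝ c x + b * inner ℝ d x := by
    intro x
    rw [inner_add_left, real_inner_smul_left, real_inner_smul_left]
  have hgnn : ∀ x, 0 ≤ g x := by
    intro x
    have := convexOn_exp.2 (Set.mem_univ (inner ℝ c x : ℝ)) (Set.mem_univ (inner ℝ d x : ℝ))
       ha.le hb.le hab
    simp only [smul_eq_mul] at this
    simp only [hg, hinner x]
    linarith
  have hgpos : ∀ x, (inner ℝ c x : ℝ) ≠ inner ℝ d x → 0 < g x := by
    intro x hx
    have := strictConvexOn_exp.2 (Set.mem_univ (inner ℝ c x : ℝ)) (Set.mem_univ (inner ℝ d x : ℝ))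
       hx ha hb hab
    simp only [smul_eq_mul] at this
    simp only [hg, hinner x]
    linarith
  have hgi : IntegrableOn g P volume := by
    exact (((hinteg c).const_mul a).add ((hinteg d).const_mul b)).sub (hinteg (a • c + b • d))
  -- hyperplane has measure zero
  have hker : volume {x : EuclideanSpace ℝ (Fin n) | (inner ℝ c x : ℝ) = inner ℝ d x} = 0 := by
    have hne : c - d ≠ 0 := sub_ne_zero.mpr hcd
    have hset : {x : EuclideanSpace ℝ (Fin n) | (inner ℝ c x : ℝ) = inner ℝ d x}
        = (LinearMap.ker (innerSL ℝ (c - d)).toLinearMap : Submodule ℝ _) := by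
      ext x
      simp [LinearMap.mem_ker, inner_sub_left, sub_eq_zero]
    rw [hset]
    apply Measure.addHaar_submodule
    intro htop
    have hx := htop ▸ Submodule.mem_top (x := c - d)
    rw [LinearMap.mem_ker] at hx
    have : (inner ℝ (c - d) (c - d) : ℝ) = 0 := hx
    exact hne (inner_self_eq_zero.mp this)
  have hsupp : 0 < volume (Function.support g ∩ P) := by
    have hsub : P ⊆ (Function.support g ∩ P) ∪
        {x : EuclideanSpace ℝ (Fin n) | (inner ℝ c x : ℝ) = inner ℝ d x} := by
      intro x hxP
      by_cases hx : (inner ℝ c x : ℝ) = inner ℝ d x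
      · exact Or.inr hx
      · exact Or.inl ⟨(hgpos x hx).ne', hxP⟩
    have := (measure_mono hsub).trans (measure_union_le (μ := volume) _ _)
    rw [hker, add_zero] at this
    exact lt_of_lt_of_le hpos this
  have hint : 0 < ∫ x in P, g x := by
    rw [setIntegral_pos_iff_support_of_nonneg_ae (Filter.Eventually.of_forall hgnn) hgi]
    exact hsupp
  have heq : ∫ x in P, g x = a * (∫ x in P, Real.exp (inner ℝ c x : ℝ))
      + b * (∫ x in P, Real.exp (inner ℝ d x : ℝ))
      - ∫ x in P, Real.exp (inner ℝ (a • c + b • d) x : ℝ) := by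
    have h1 : IntegrableOn (fun x => a * Real.exp (inner ℝ c x : ℝ)
        + b * Real.exp (inner ℝ d x : ℝ)) P volume :=
      ((hinteg c).const_mul a).add ((hinteg d).const_mul b)
    rw [hg]
    rw [integral_sub h1 (hinteg (a • c + b • d)),
      integral_add ((hinteg c).const_mul a) ((hinteg d).const_mul b),
      integral_const_mul, integral_const_mul]
  simp only [smul_eq_mul]
  rw [heq] at hint
  linarith
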